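/- The full transformation monoid ℕ^ℕ with the pointwise topology has property X with respect to the symmetric group Sym(ℕ): for every s ∈ ℕ^ℕ there exist f, g ∈ ℕ^ℕ and a permutation t_s ∈ Sym(ℕ) with s = f ∘ t_s ∘ g, such that for every neighbourhood B of t_s, the set f ∘ (B ∩ Sym(ℕ)) ∘ g is a neighbourhood of s in the pointwise topology. -/

import Mathlib

open Topology

/-- The full transformation monoid `ℕ^ℕ`: maps `ℕ → ℕ` with functions acting on
the right, composed from left to right: `(f * g) x = g (f x)`. -/
def Transf : Type := ℕ → ℕ

instance : Semigroup Transf where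
  mul f g := fun x => g (f x)
  mul_assoc _ _ _ := rfl

/-- The pointwise (product) topology on `ℕ^ℕ`, with `ℕ` discrete. -/
instance : TopologicalSpace Transf :=
  inferInstanceAs (TopologicalSpace (ℕ → ℕ))

/-- The symmetric group `Sym(ℕ)`, viewed as the set of bijective elements of
`ℕ^ℕ`. -/
def symN : Set Transf := {h : Transf | Function.Bijective (h : ℕ → ℕ)}

/-- Any injection defined on a subset of `ℕ` whose domain-complement and
range-complement are infinite extends to a permutation of `ℕ`. -/
private lemma exists_perm_extend (p : ℕ → ℕ) (A : Set ℕ)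
    (hinj : Set.InjOn p A) (hA : Aᶜ.Infinite) (hR : (p '' A)ᶜ.Infinite) :
    ∃ u : ℕ ≃ ℕ, ∀ a ∈ A, u a = p a := by
  classical
  haveI : Infinite ↥Aᶜ := hA.to_subtype
  haveI : Infinite ↥(p '' A)ᶜ := hR.to_subtype
  haveI : Denumerable ↥Aᶜ := Denumerable.ofEncodableOfInfinite _
  haveI : Denumerable ↥(p '' A)ᶜ := Denumerable.ofEncodableOfInfinite _
  let q : ↥A ≃ ↥(p '' A) := Equiv.Set.imageOfInjOn p A hinj
  let r : ↥(Aᶜ) ≃ ↥((p '' A)ᶜ) := (Denumerable.eqv _).trans (Denumerable.eqv _).symm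
  refine ⟨(Equiv.Set.sumCompl A).symm.trans ((q.sumCongr r).trans (Equiv.Set.sumCompl _)), ?_⟩
  intro a ha
  simp [Equiv.Set.sumCompl_symm_apply_of_mem ha, q, Equiv.Set.imageOfInjOn]

private lemma mem_nhds_cylinder (t : ℕ → ℕ) (B : Set (ℕ → ℕ)) (h : B ∈ nhds t) :
    ∃ I : Set ℕ, I.Finite ∧ {u : ℕ → ℕ | ∀ i ∈ I, u i = t i} ⊆ B := by
  rw [nhds_pi] at h
  obtain ⟨I, hIfin, V, hV, hsub⟩ := Filter.mem_pi.1 h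
  refine ⟨I, hIfin, fun u hu => hsub fun i hi => ?_⟩
  have hti : t i ∈ V i := by
    have := hV i
    rwa [nhds_discrete, Filter.mem_pure] at this
  rw [hu i hi]; exact hti

private lemma cylinder_mem_nhds (s : ℕ → ℕ) (I : Set ℕ) (hI : I.Finite) :
    {v : ℕ → ℕ | ∀ i ∈ I, v i = s i} ∈ nhds s := by
  have hset : {v : ℕ → ℕ | ∀ i ∈ I, v i = s i} = I.pi (fun i => {s i}) := by
    ext v; simp [Set.mem_pi]
  rw [hset]
  exact (isOpen_set_pi hI fun i _ => isOpen_discrete _).mem_nhds (by simp [Set.mem_pi])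

/-- `ℕ^ℕ` with the pointwise topology has property **X** with respect to
`Sym(ℕ)`: for every `s ∈ ℕ^ℕ` there are `f, g ∈ ℕ^ℕ` and a permutation `t` with
`s = f * t * g`, such that for every neighbourhood `B` of `t`, the set
`f * (B ∩ Sym(ℕ)) * g` is a neighbourhood of `s`. -/
theorem stmt10 :
    ∀ s : Transf, ∃ f g : Transf, ∃ t ∈ symN, s = f * t * g ∧
      ∀ B ∈ nhds t, (fun b => f * b * g) '' (B ∩ symN) ∈ nhds s := by
  classical
  intro s
  -- the permutation `t`: conjugate by the pairing of `(x, y) ↦ (x, swap x (s x) y)`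
  let T : ℕ × ℕ ≃ ℕ × ℕ :=
    { toFun := fun p => (p.1, Equiv.swap p.1 (s p.1) p.2)
      invFun := fun p => (p.1, Equiv.swap p.1 (s p.1) p.2)
      left_inv := fun p => by simp
      right_inv := fun p => by simp }
  let tE : ℕ ≃ ℕ := (Nat.pairEquiv.symm.trans T).trans Nat.pairEquiv
  have htE : ∀ x y : ℕ, tE (Nat.pair x y) = Nat.pair x (Equiv.swap x (s x) y) := by
    intro x y
    show Nat.pair (Nat.unpair (Nat.pair x y)).1 (Equiv.swap (Nat.unpair (Nat.pair x y)).1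
      (s (Nat.unpair (Nat.pair x y)).1) (Nat.unpair (Nat.pair x y)).2) = _
    rw [Nat.unpair_pair]
  let f : Transf := fun x => Nat.pair x x
  let g : Transf := fun n => (Nat.unpair n).2
  refine ⟨f, g, (tE : ℕ → ℕ), tE.bijective, ?_, ?_⟩
  · funext x
    show s x = (Nat.unpair (tE (Nat.pair x x))).2
    rw [htE x x, Nat.unpair_pair, Equiv.swap_apply_left]
  · intro B hB
    obtain ⟨I, hIfin, hsub⟩ := mem_nhds_cylinder (tE : ℕ → ℕ) B hB
    have hdiaginj : Function.Injective (fun x : ℕ => Nat.pair x x) := by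
      intro a b h
      have := congrArg (fun n => (Nat.unpair n).1) h
      simpa using this
    have hF' : ((fun x : ℕ => Nat.pair x x) ⁻¹' I).Finite := hIfin.preimage hdiaginj.injOn
    refine Filter.mem_of_superset
      (cylinder_mem_nhds (s : ℕ → ℕ) ((fun x : ℕ => Nat.pair x x) ⁻¹' I) hF') ?_
    intro v hv
    -- build the permutation `u` mapped to `v`
    set N : ℕ := hIfin.toFinset.sup (fun n => (Nat.unpair ((tE : ℕ → ℕ) n)).1) + 1 with hN
    have hNlt : ∀ n ∈ I, (Nat.unpair (tE n)).1 < N := by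
      intro n hn
      have : (Nat.unpair (tE n)).1 ≤ hIfin.toFinset.sup (fun n => (Nat.unpair (tE n)).1) :=
        Finset.le_sup (f := fun n => (Nat.unpair (tE n)).1) (hIfin.mem_toFinset.2 hn)
      omega
    set p : ℕ → ℕ := fun n =>
      if n ∈ I then tE n else Nat.pair (N + 1 + (Nat.unpair n).1) (v ((Nat.unpair n).1)) with hp
    set A : Set ℕ := I ∪ Set.range (fun x : ℕ => Nat.pair x x) with hA
    have hpI : ∀ n ∈ I, p n = tE n := fun n hn => if_pos hn
    have hpD : ∀ x : ℕ, Nat.pair x x ∉ I →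
        p (Nat.pair x x) = Nat.pair (N + 1 + x) (v x) := by
      intro x hx
      simp [hp, hx, Nat.unpair_pair]
    have hmemD : ∀ x : ℕ, Nat.pair x x ∈ A := fun x => Or.inr ⟨x, rfl⟩
    have hrange : ∀ b : ℕ, b ∈ Set.range (fun x : ℕ => Nat.pair x x) →
        ∃ x : ℕ, Nat.pair x x = b := by
      intro b hb
      simpa [Set.mem_range] using hb
    have hinj : Set.InjOn p A := by
      have key : ∀ a ∈ I, ∀ x : ℕ, Nat.pair x x ∉ I → p a ≠ p (Nat.pair x x) := by
        intro a ha x hx h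
        rw [hpI a ha, hpD x hx] at h
        have h1 := congrArg (fun n => (Nat.unpair n).1) h
        simp only [Nat.unpair_pair] at h1
        have := hNlt a ha
        omega
      intro a ha b hb hab
      by_cases haI : a ∈ I <;> by_cases hbI : b ∈ I
      · rw [hpI a haI, hpI b hbI] at hab
        exact tE.injective hab
      · obtain ⟨x, rfl⟩ := hrange b (hb.resolve_left hbI)
        exact absurd hab (key a haI x hbI)
      · obtain ⟨x, rfl⟩ := hrange a (ha.resolve_left haI)
        exact absurd hab.symm (key b hbI x haI)
      · obtain ⟨x, rfl⟩ := hrange a (ha.resolve_left haI)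
        obtain ⟨y, rfl⟩ := hrange b (hb.resolve_left hbI)
        rw [hpD x haI, hpD y hbI] at hab
        have h1 := congrArg (fun n => (Nat.unpair n).1) hab
        simp only [Nat.unpair_pair] at h1
        have : x = y := by omega
        rw [this]
    have hAc : Aᶜ.Infinite := by
      have h1 : (Set.range (fun x : ℕ => Nat.pair x x))ᶜ.Infinite := by
        apply Set.infinite_of_injective_forall_mem (f := fun x : ℕ => Nat.pair x (x + 1))
        · intro a b h
          have := congrArg (fun n => (Nat.unpair n).1) h
          simpa using this
        · intro x
          simp only [Set.mem_compl_iff, Set.mem_range, not_exists]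
          intro y h
          have h1 := congrArg (fun n => (Nat.unpair n).1) h
          have h2 := congrArg (fun n => (Nat.unpair n).2) h
          simp only [Nat.unpair_pair] at h1 h2
          omega
      have heq : Aᶜ = (Set.range fun x : ℕ => Nat.pair x x)ᶜ \ I := by
        rw [hA, Set.compl_union, Set.diff_eq, Set.inter_comm]
      rw [heq]
      exact h1.diff hIfin
    have hRc : (p '' A)ᶜ.Infinite := by
      apply Set.infinite_of_injective_forall_mem (f := fun w : ℕ => Nat.pair N w)
      · intro a b h
        have := congrArg (fun n => (Nat.unpair n).2) h
        simpa using this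
      · intro w
        intro hc
        obtain ⟨a, ha, h⟩ := hc
        by_cases haI : a ∈ I
        · rw [hpI a haI] at h
          have h1 := congrArg (fun n => (Nat.unpair n).1) h
          simp only [Nat.unpair_pair] at h1
          have := hNlt a haI
          omega
        · obtain ⟨x, rfl⟩ := hrange a (ha.resolve_left haI)
          rw [hpD x haI] at h
          have h1 := congrArg (fun n => (Nat.unpair n).1) h
          simp only [Nat.unpair_pair] at h1
          omega
    obtain ⟨u, hu⟩ := exists_perm_extend p A hinj hAc hRc
    refine ⟨(u : ℕ → ℕ), ⟨hsub ?_, u.bijective⟩, ?_⟩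
    · intro i hi
      rw [hu i (Or.inl hi), hpI i hi]
    · funext x
      show (Nat.unpair (u (Nat.pair x x))).2 = v x
      rw [hu _ (hmemD x)]
      by_cases hx : Nat.pair x x ∈ I
      · rw [hpI _ hx, htE x x, Nat.unpair_pair, Equiv.swap_apply_left]
        exact (hv x hx).symm
      · rw [hpD x hx, Nat.unpair_pair]
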